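/- Let ℓ > 0 and m > 0, and let J : ℝ → ℝ be a continuously differentiable nondecreasing function with J(0) = 0. For λ > 0 define the weight w_λ(ẑ) := (1 + λ²‖ẑ‖²)^{−ℓ/2} for ẑ ∈ ℝ⁴. Then there exists λ₀ > 0, depending only on ℓ and m, such that for every 0 < λ ≤ λ₀ and every Schwartz function f : ℝ⁴ → ℝ one has ∫_{ℝ⁴} w_λ(ẑ) · J(f(ẑ)) · ( −Δf(ẑ) + m² f(ẑ) ) dẑ ≥ (m²/2) ∫_{ℝ⁴} w_λ(ẑ) · J(f(ẑ)) · f(ẑ) dẑ, where Δ denotes the Laplacian on ℝ⁴ (the sum of the second partial derivatives) and ‖·‖ the Euclidean norm. -/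

import Mathlib

open MeasureTheory

/-- The Laplacian on `ℝ⁴`: the sum of the second partial derivatives. -/
noncomputable def laplacian4 (f : EuclideanSpace ℝ (Fin 4) → ℝ)
    (x : EuclideanSpace ℝ (Fin 4)) : ℝ :=
  ∑ i : Fin 4,
    fderiv ℝ (fun y => fderiv ℝ f y (EuclideanSpace.single i 1)) x (EuclideanSpace.single i 1)

section WCAux

variable {E : Type*} [NormedAddCommGroup E] [InnerProductSpace ℝ E]

private lemma wc_q_pos (lam : ℝ) (z : E) : (0:ℝ) < 1 + lam^2*‖z‖^2 := by positivity

private lemma wc_q_one_le (lam : ℝ) (z : E) : (1:ℝ) ≤ 1 + lam^2*‖z‖^2 :=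
  le_add_of_nonneg_right (by positivity)

private lemma wc_hasFDerivAt_weight (lam p : ℝ) (z : E) :
    HasFDerivAt (fun z : E => (1 + lam^2*‖z‖^2) ^ p)
      ((p * (1 + lam^2*‖z‖^2) ^ (p-1) * (2*lam^2)) • (innerSL ℝ z)) z := by
  have h1 : HasFDerivAt (fun z : E => 1 + lam^2*‖z‖^2) ((2*lam^2) • innerSL ℝ z) z := by
    have h0 := (hasStrictFDerivAt_norm_sq z).hasFDerivAt
    have h2 := (h0.const_mul (lam^2)).const_add 1
    refine h2.congr_fderiv ?_
    ext y
    simp [two_smul]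
    ring
  have h2 : HasDerivAt (fun t : ℝ => t ^ p) (p * (1+lam^2*‖z‖^2) ^ (p-1)) (1+lam^2*‖z‖^2) :=
    Real.hasDerivAt_rpow_const (Or.inl (wc_q_pos lam z).ne')
  have h3 := h2.comp_hasFDerivAt z h1
  refine h3.congr_fderiv ?_
  rw [smul_smul]

private lemma wc_hasFDerivAt_Wvf (lam p : ℝ) (v : E) (z : E) :
    HasFDerivAt (fun z : E => p * (1 + lam^2*‖z‖^2) ^ (p-1) * (2*lam^2) * (inner ℝ z v : ℝ))
      ((p * (1 + lam^2*‖z‖^2) ^ (p-1) * (2*lam^2)) • (innerSL ℝ v)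
        + (inner ℝ z v : ℝ) •
          ((2*lam^2) • (p • (((p-1) * (1 + lam^2*‖z‖^2) ^ (p-1-1) * (2*lam^2)) • innerSL ℝ z)))) z := by
  have hc : HasFDerivAt (fun z : E => p * (1 + lam^2*‖z‖^2) ^ (p-1) * (2*lam^2))
      ((2*lam^2) • (p • (((p-1) * (1 + lam^2*‖z‖^2) ^ (p-1-1) * (2*lam^2)) • innerSL ℝ z))) z :=
    ((wc_hasFDerivAt_weight lam (p-1) z).const_mul p).mul_const (2*lam^2)
  have hd : HasFDerivAt (fun z : E => (inner ℝ z v : ℝ)) (innerSL ℝ v) z := by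
    have he : (fun z : E => (inner ℝ z v : ℝ)) = ⇑(innerSL ℝ v) := funext fun z => by
      simp [real_inner_comm]
    rw [he]
    exact (innerSL ℝ v).hasFDerivAt
  exact hc.mul hd

private lemma wc_monotone_hasDerivAt_nonneg {J : ℝ → ℝ} (hJ : Monotone J) {t d : ℝ}
    (h : HasDerivAt J d t) : 0 ≤ d := by
  have h2 : Filter.Tendsto (slope J t) (nhdsWithin t (Set.Ioi t)) (nhds d) := by
    have h3 := h.hasDerivWithinAt (s := Set.Ioi t)
    rw [hasDerivWithinAt_iff_tendsto_slope] at h3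
    rwa [Set.diff_singleton_eq_self (by simp)] at h3
  refine ge_of_tendsto h2 ?_
  filter_upwards [self_mem_nhdsWithin] with x hx
  rw [slope_def_field]
  exact div_nonneg (by simpa using hJ (le_of_lt hx)) (by simp at hx; linarith)

end WCAux

section WCGfun
variable {J : ℝ → ℝ}

private lemma wc_G_hasDerivAt (hJc : Continuous J) (t : ℝ) :
    HasDerivAt (fun u => ∫ τ in (0:ℝ)..u, J τ) (J t) t :=
  intervalIntegral.integral_hasDerivAt_right (hJc.intervalIntegrable _ _)
    (hJc.stronglyMeasurableAtFilter _ _) hJc.continuousAt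

private lemma wc_G_nonneg (hJc : Continuous J) (hm : Monotone J) (hJ0 : J 0 = 0) (t : ℝ) :
    0 ≤ ∫ τ in (0:ℝ)..t, J τ := by
  rcases le_or_gt 0 t with h | h
  · apply intervalIntegral.integral_nonneg h
    intro x hx
    simpa [hJ0] using hm hx.1
  · rw [intervalIntegral.integral_symm, neg_nonneg]
    have h1 : (∫ τ in t..(0:ℝ), J τ) ≤ ∫ _ in t..(0:ℝ), (0:ℝ) := by
      apply intervalIntegral.integral_mono_on h.le (hJc.intervalIntegrable _ _)
        intervalIntegrable_const
      intro x hx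
      simpa [hJ0] using hm hx.2
    simpa using h1

private lemma wc_G_le (hJc : Continuous J) (hm : Monotone J) (hJ0 : J 0 = 0) (t : ℝ) :
    (∫ τ in (0:ℝ)..t, J τ) ≤ t * J t := by
  rcases le_or_gt 0 t with h | h
  · have h1 : (∫ τ in (0:ℝ)..t, J τ) ≤ ∫ _ in (0:ℝ)..t, J t := by
      apply intervalIntegral.integral_mono_on h (hJc.intervalIntegrable _ _)
        intervalIntegrable_const
      intro x hx
      exact hm hx.2
    simpa using h1
  · have h1 : (∫ _ in t..(0:ℝ), J t) ≤ ∫ τ in t..(0:ℝ), J τ := by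
      apply intervalIntegral.integral_mono_on h.le intervalIntegrable_const
        (hJc.intervalIntegrable _ _)
      intro x hx
      exact hm hx.1
    rw [intervalIntegral.integral_symm]
    simp only [intervalIntegral.integral_const, smul_eq_mul] at h1 ⊢
    nlinarith [h1]

private lemma wc_G_abs_le (hJc : Continuous J) {R M t : ℝ}
    (hM : ∀ x ∈ Set.Icc (-R) R, |J x| ≤ M) (ht : |t| ≤ R) :
    |∫ τ in (0:ℝ)..t, J τ| ≤ M * |t| := by
  have h := intervalIntegral.norm_integral_le_of_norm_le_const (C := M) (f := J)
    (a := 0) (b := t) ?_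
  · simpa [abs_sub_comm] using h
  · intro x hx
    rw [Set.uIoc] at hx
    have h1 : -R ≤ min 0 t := by
      rcases abs_le.1 ht with ⟨h2, h3⟩
      simp [le_min_iff]; constructor <;> linarith
    have h2 : max 0 t ≤ R := by
      rcases abs_le.1 ht with ⟨h2, h3⟩
      simp [max_le_iff]; constructor <;> linarith
    exact hM x ⟨le_of_lt (lt_of_le_of_lt h1 hx.1), le_trans hx.2 h2⟩

end WCGfun

section WCKey

private noncomputable def wcW (lam p : ℝ) (z : EuclideanSpace ℝ (Fin 4)) : ℝ :=
  (1 + lam^2*‖z‖^2) ^ p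

private noncomputable def wcWv (lam p : ℝ) (i : Fin 4) (z : EuclideanSpace ℝ (Fin 4)) : ℝ :=
  p * (1 + lam^2*‖z‖^2) ^ (p-1) * (2*lam^2) * (inner ℝ z (EuclideanSpace.single i (1:ℝ)) : ℝ)

private noncomputable def wcD (lam p : ℝ) (i : Fin 4) (z : EuclideanSpace ℝ (Fin 4)) : ℝ :=
  2*p*lam^2 * (1 + lam^2*‖z‖^2) ^ (p-1)
    * (inner ℝ (EuclideanSpace.single i (1:ℝ)) (EuclideanSpace.single i (1:ℝ)) : ℝ)
  + 4*p*(p-1)*lam^4 * (1 + lam^2*‖z‖^2) ^ (p-1-1)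
    * (inner ℝ z (EuclideanSpace.single i (1:ℝ)) : ℝ)^2

private noncomputable def wcG (J : ℝ → ℝ) (t : ℝ) : ℝ := ∫ τ in (0:ℝ)..t, J τ

set_option maxHeartbeats 2000000 in
private lemma wc_key_step (lam p : ℝ) (hlam : 0 < lam) (hp : p < 0)
    {J : ℝ → ℝ} (hJ : ContDiff ℝ 1 J) (hJmono : Monotone J) (hJ0 : J 0 = 0)
    (f : SchwartzMap (EuclideanSpace ℝ (Fin 4)) ℝ) (i : Fin 4) :
    (∫ z : EuclideanSpace ℝ (Fin 4), wcW lam p z * J (f z) *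
        fderiv ℝ (fun y => fderiv ℝ (⇑f) y (EuclideanSpace.single i 1)) z
          (EuclideanSpace.single i 1))
      ≤ ∫ z : EuclideanSpace ℝ (Fin 4), wcD lam p i z * wcG J (f z) := by
  classical
  set v : EuclideanSpace ℝ (Fin 4) := EuclideanSpace.single i 1 with hv
  set f1 : SchwartzMap (EuclideanSpace ℝ (Fin 4)) ℝ :=
    SchwartzMap.evalCLM ℝ _ ℝ v (SchwartzMap.fderivCLM ℝ _ ℝ f) with hf1def
  set f2 : SchwartzMap (EuclideanSpace ℝ (Fin 4)) ℝ :=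
    SchwartzMap.evalCLM ℝ _ ℝ v (SchwartzMap.fderivCLM ℝ _ ℝ f1) with hf2def
  have hf1coe : ∀ y, f1 y = fderiv ℝ (⇑f) y v := fun y => rfl
  have hf2coe : ∀ y, f2 y = fderiv ℝ (⇑f1) y v := fun y => rfl
  have hEq1 : (fun y => fderiv ℝ (⇑f) y v) = ⇑f1 := rfl
  rw [hEq1]
  -- basic positivity facts for the weight
  have hq_pos : ∀ z : EuclideanSpace ℝ (Fin 4), (0:ℝ) < 1 + lam^2*‖z‖^2 := wc_q_pos lam
  have hq_one : ∀ z : EuclideanSpace ℝ (Fin 4), (1:ℝ) ≤ 1 + lam^2*‖z‖^2 := wc_q_one_le lam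
  have hw_nonneg : ∀ z, 0 ≤ wcW lam p z := fun z => Real.rpow_nonneg (by positivity) p
  have hw_le_one : ∀ z, wcW lam p z ≤ 1 := fun z =>
    Real.rpow_le_one_of_one_le_of_nonpos (hq_one z) hp.le
  have hw1_nonneg : ∀ z : EuclideanSpace ℝ (Fin 4), 0 ≤ (1 + lam^2*‖z‖^2) ^ (p-1) :=
    fun z => Real.rpow_nonneg (by positivity) _
  have hw1_le_one : ∀ z : EuclideanSpace ℝ (Fin 4), (1 + lam^2*‖z‖^2) ^ (p-1) ≤ 1 := fun z =>
    Real.rpow_le_one_of_one_le_of_nonpos (hq_one z) (by linarith)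
  have hw2_nonneg : ∀ z : EuclideanSpace ℝ (Fin 4), 0 ≤ (1 + lam^2*‖z‖^2) ^ (p-1-1) :=
    fun z => Real.rpow_nonneg (by positivity) _
  -- facts about J
  have hJc : Continuous J := hJ.continuous
  have hJd : Differentiable ℝ J := hJ.differentiable one_ne_zero
  have hJ'c : Continuous (deriv J) := hJ.continuous_deriv le_rfl
  have hJ'nn : ∀ t, 0 ≤ deriv J t := fun t =>
    wc_monotone_hasDerivAt_nonneg hJmono (hJd t).hasDerivAt
  -- bounds
  set R : ℝ := SchwartzMap.seminorm ℝ 0 0 f with hR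
  have hfR : ∀ z, |f z| ≤ R := fun z => by
    simpa [Real.norm_eq_abs] using SchwartzMap.norm_le_seminorm ℝ f z
  have hfmem : ∀ z, f z ∈ Set.Icc (-R) R := fun z => by
    rcases abs_le.1 (hfR z) with ⟨h1, h2⟩; exact ⟨h1, h2⟩
  obtain ⟨M0, hM0⟩ := (isCompact_Icc (a := -R) (b := R)).exists_bound_of_continuousOn
    hJc.continuousOn
  obtain ⟨M1, hM1⟩ := (isCompact_Icc (a := -R) (b := R)).exists_bound_of_continuousOn
    hJ'c.continuousOn
  have hJfb : ∀ z, |J (f z)| ≤ M0 := fun z => by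
    simpa [Real.norm_eq_abs] using hM0 _ (hfmem z)
  have hM0nn : 0 ≤ M0 := (abs_nonneg _).trans (hJfb 0)
  have hJ'fb : ∀ z, |deriv J (f z)| ≤ M1 := fun z => by
    simpa [Real.norm_eq_abs] using hM1 _ (hfmem z)
  have hM1nn : 0 ≤ M1 := (abs_nonneg _).trans (hJ'fb 0)
  set R1 : ℝ := SchwartzMap.seminorm ℝ 0 0 f1 with hR1
  have hf1R : ∀ z, |f1 z| ≤ R1 := fun z => by
    simpa [Real.norm_eq_abs] using SchwartzMap.norm_le_seminorm ℝ f1 z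
  have hR1nn : 0 ≤ R1 := (abs_nonneg _).trans (hf1R 0)
  -- bound on the weight derivative
  have hinner_le : ∀ z : EuclideanSpace ℝ (Fin 4), |(inner ℝ z v : ℝ)| ≤ ‖z‖ := fun z => by
    calc |(inner ℝ z v : ℝ)| ≤ ‖z‖ * ‖v‖ := abs_real_inner_le_norm z v
    _ = ‖z‖ := by rw [hv]; simp
  have hkey1 : ∀ z : EuclideanSpace ℝ (Fin 4),
      (1 + lam^2*‖z‖^2) ^ (p-1) * (lam * ‖z‖) ≤ 1 := by
    intro z
    have hlamz : lam * ‖z‖ ≤ Real.sqrt (1 + lam^2*‖z‖^2) := by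
      rw [show lam * ‖z‖ = Real.sqrt ((lam*‖z‖)^2) from (Real.sqrt_sq (by positivity)).symm]
      apply Real.sqrt_le_sqrt
      nlinarith [sq_nonneg (lam*‖z‖)]
    have h2 : (1 + lam^2*‖z‖^2) ^ (p-1) * Real.sqrt (1 + lam^2*‖z‖^2) ≤ 1 := by
      rw [Real.sqrt_eq_rpow, ← Real.rpow_add (hq_pos z)]
      exact Real.rpow_le_one_of_one_le_of_nonpos (hq_one z) (by linarith)
    calc (1 + lam^2*‖z‖^2) ^ (p-1) * (lam * ‖z‖)
        ≤ (1 + lam^2*‖z‖^2) ^ (p-1) * Real.sqrt (1 + lam^2*‖z‖^2) :=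
          mul_le_mul_of_nonneg_left hlamz (hw1_nonneg z)
    _ ≤ 1 := h2
  have hWvb : ∀ z, |wcWv lam p i z| ≤ 2* |p| *lam := by
    intro z
    rw [wcWv, ← hv]
    have h3 := hw1_nonneg z
    have h4 := hinner_le z
    have h5 := hkey1 z
    have h6 : |p * (1 + lam^2*‖z‖^2) ^ (p-1) * (2*lam^2) * (inner ℝ z v : ℝ)|
        = |p| * ((1 + lam^2*‖z‖^2) ^ (p-1)) * (2*lam^2) * |(inner ℝ z v : ℝ)| := by
      rw [abs_mul, abs_mul, abs_mul, abs_of_nonneg h3, abs_of_nonneg (by positivity : (0:ℝ) ≤ 2*lam^2)]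
    rw [h6]
    have h7 : ((1 + lam^2*‖z‖^2) ^ (p-1)) * |(inner ℝ z v : ℝ)| * lam ≤ 1 := by
      calc ((1 + lam^2*‖z‖^2) ^ (p-1)) * |(inner ℝ z v : ℝ)| * lam
          ≤ ((1 + lam^2*‖z‖^2) ^ (p-1)) * ‖z‖ * lam := by
            apply mul_le_mul_of_nonneg_right (mul_le_mul_of_nonneg_left h4 h3) hlam.le
      _ = (1 + lam^2*‖z‖^2) ^ (p-1) * (lam * ‖z‖) := by ring
      _ ≤ 1 := h5
    nlinarith [mul_le_mul_of_nonneg_left h7 (show (0:ℝ) ≤ 2 * |p| * lam by positivity)]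
  -- the inner product with the basis vector
  have hvv : (inner ℝ v v : ℝ) = 1 := by
    rw [hv]; simp [EuclideanSpace.inner_single_right]
  have hkey2 : ∀ z : EuclideanSpace ℝ (Fin 4),
      lam^2 * ‖z‖^2 * (1 + lam^2*‖z‖^2) ^ (p-1-1) ≤ 1 := by
    intro z
    have h1 : lam^2*‖z‖^2 * (1 + lam^2*‖z‖^2) ^ (p-1-1)
        ≤ (1 + lam^2*‖z‖^2) ^ (p-1-1) * (1 + lam^2*‖z‖^2) := by
      rw [mul_comm]
      exact mul_le_mul_of_nonneg_left (by nlinarith [sq_nonneg (lam*‖z‖)]) (hw2_nonneg z)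
    have h2 : (1 + lam^2*‖z‖^2) ^ (p-1-1) * (1 + lam^2*‖z‖^2) = (1 + lam^2*‖z‖^2) ^ (p-1) := by
      rw [← Real.rpow_add_one (hq_pos z).ne' (p-1-1)]
      congr 1
      ring
    calc lam^2*‖z‖^2 * (1 + lam^2*‖z‖^2) ^ (p-1-1)
        ≤ (1 + lam^2*‖z‖^2) ^ (p-1) := le_of_le_of_eq h1 h2
    _ ≤ 1 := hw1_le_one z
  have hDb : ∀ z, |wcD lam p i z| ≤ 2* |p| *lam^2 + 4* |p| * |p-1| *lam^2 := by
    intro z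
    rw [wcD, ← hv, hvv]
    have h1 : |2*p*lam^2 * (1 + lam^2*‖z‖^2) ^ (p-1) * 1| ≤ 2* |p| *lam^2 := by
      rw [mul_one, abs_mul, abs_of_nonneg (hw1_nonneg z)]
      have : |2*p*lam^2| = 2* |p| *lam^2 := by
        rw [show 2*p*lam^2 = p * (2*lam^2) by ring, abs_mul,
          abs_of_nonneg (by positivity : (0:ℝ) ≤ 2*lam^2)]
        ring
      rw [this]
      nlinarith [mul_le_mul_of_nonneg_left (hw1_le_one z)
        (show (0:ℝ) ≤ 2 * |p| * lam^2 by positivity)]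
    have h2 : |4*p*(p-1)*lam^4 * (1 + lam^2*‖z‖^2) ^ (p-1-1) * (inner ℝ z v : ℝ)^2|
        ≤ 4* |p| * |p-1| *lam^2 := by
      have ha : |4*p*(p-1)*lam^4 * (1 + lam^2*‖z‖^2) ^ (p-1-1) * (inner ℝ z v : ℝ)^2|
          = (4* |p| * |p-1| *lam^2) * (lam^2 * ((1 + lam^2*‖z‖^2) ^ (p-1-1) * (inner ℝ z v : ℝ)^2)) := by
        rw [abs_mul, abs_mul, abs_of_nonneg (hw2_nonneg z), abs_of_nonneg (sq_nonneg (inner ℝ z v : ℝ))]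
        rw [show 4*p*(p-1)*lam^4 = (p * (p-1)) * (4*lam^4) by ring, abs_mul,
          abs_mul p (p-1), abs_of_nonneg (by positivity : (0:ℝ) ≤ 4*lam^4)]
        ring
      rw [ha]
      have hb : lam^2 * ((1 + lam^2*‖z‖^2) ^ (p-1-1) * (inner ℝ z v : ℝ)^2) ≤ 1 := by
        have hc : (inner ℝ z v : ℝ)^2 ≤ ‖z‖^2 := by
          rw [← sq_abs (inner ℝ z v : ℝ)]
          exact pow_le_pow_left₀ (abs_nonneg _) (hinner_le z) 2
        calc lam^2 * ((1 + lam^2*‖z‖^2) ^ (p-1-1) * (inner ℝ z v : ℝ)^2)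
            ≤ lam^2 * ((1 + lam^2*‖z‖^2) ^ (p-1-1) * ‖z‖^2) := by
              apply mul_le_mul_of_nonneg_left
                (mul_le_mul_of_nonneg_left hc (hw2_nonneg z)) (by positivity)
        _ = lam^2 * ‖z‖^2 * (1 + lam^2*‖z‖^2) ^ (p-1-1) := by ring
        _ ≤ 1 := hkey2 z
      nlinarith [mul_le_mul_of_nonneg_left hb
        (show (0:ℝ) ≤ 4 * |p| * |p-1| * lam^2 by positivity)]
    calc |2*p*lam^2 * (1 + lam^2*‖z‖^2) ^ (p-1) * 1
          + 4*p*(p-1)*lam^4 * (1 + lam^2*‖z‖^2) ^ (p-1-1) * (inner ℝ z v : ℝ)^2|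
        ≤ |2*p*lam^2 * (1 + lam^2*‖z‖^2) ^ (p-1) * 1|
          + |4*p*(p-1)*lam^4 * (1 + lam^2*‖z‖^2) ^ (p-1-1) * (inner ℝ z v : ℝ)^2| := abs_add_le _ _
    _ ≤ 2* |p| *lam^2 + 4* |p| * |p-1| *lam^2 := add_le_add h1 h2
  -- continuity
  have hqc : Continuous (fun z : EuclideanSpace ℝ (Fin 4) => 1 + lam^2*‖z‖^2) := by
    fun_prop
  have hwc : Continuous (wcW lam p) := hqc.rpow_const (fun z => Or.inl (hq_pos z).ne')
  have hwc1 : Continuous (fun z : EuclideanSpace ℝ (Fin 4) => (1 + lam^2*‖z‖^2) ^ (p-1)) :=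
    hqc.rpow_const (fun z => Or.inl (hq_pos z).ne')
  have hwc2 : Continuous (fun z : EuclideanSpace ℝ (Fin 4) => (1 + lam^2*‖z‖^2) ^ (p-1-1)) :=
    hqc.rpow_const (fun z => Or.inl (hq_pos z).ne')
  have hinnerc : Continuous (fun z : EuclideanSpace ℝ (Fin 4) => (inner ℝ z v : ℝ)) :=
    continuous_id.inner continuous_const
  have hWvc : Continuous (wcWv lam p i) := by
    unfold wcWv
    exact (((continuous_const.mul hwc1).mul continuous_const).mul hinnerc)
  have hDc : Continuous (wcD lam p i) := by
    unfold wcD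
    exact (((continuous_const.mul hwc1).mul continuous_const).add
      ((continuous_const.mul hwc2).mul (hinnerc.pow 2)))
  -- integrability
  have hIf1 : Integrable (⇑f1) volume := f1.integrable
  have hIf2 : Integrable (⇑f2) volume := f2.integrable
  have hGd : Differentiable ℝ (wcG J) := fun t => (wc_G_hasDerivAt hJc t).differentiableAt
  have hGc : Continuous (wcG J) := hGd.continuous
  have hIG : Integrable (fun z => wcG J (f z)) volume := by
    apply Integrable.mono ((f.integrable).const_mul M0)
      ((hGc.comp f.continuous).aestronglyMeasurable)
    filter_upwards with z
    simp only [Real.norm_eq_abs]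
    calc |wcG J (f z)| ≤ M0 * |f z| :=
      wc_G_abs_le hJc (fun x hx => by simpa [Real.norm_eq_abs] using hM0 x hx) (hfR z)
    _ ≤ |M0 * f z| := by rw [abs_mul]; exact mul_le_mul_of_nonneg_right (le_abs_self M0) (abs_nonneg _)
  have hbm : ∀ (φ : EuclideanSpace ℝ (Fin 4) → ℝ) (K : ℝ), Continuous φ → (∀ z, |φ z| ≤ K) →
      ∀ {g : EuclideanSpace ℝ (Fin 4) → ℝ}, Integrable g volume →
        Integrable (fun z => φ z * g z) volume := by
    intro φ K hc hb g hg
    exact hg.bdd_mul hc.aestronglyMeasurable (Filter.Eventually.of_forall fun z => by simpa [Real.norm_eq_abs] using hb z)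
  have habs3 : ∀ a b c A B C : ℝ, |a| ≤ A → |b| ≤ B → |c| ≤ C → |a*b*c| ≤ A*B*C := by
    intro a b c A B C ha hb hc
    rw [abs_mul, abs_mul]
    have h1 : |a| * |b| ≤ A*B := mul_le_mul ha hb (abs_nonneg b) ((abs_nonneg a).trans ha)
    exact mul_le_mul h1 hc (abs_nonneg c) (mul_nonneg ((abs_nonneg a).trans ha) ((abs_nonneg b).trans hb))
  have habs2 : ∀ a b A B : ℝ, |a| ≤ A → |b| ≤ B → |a*b| ≤ A*B := by
    intro a b A B ha hb
    rw [abs_mul]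
    exact mul_le_mul ha hb (abs_nonneg b) ((abs_nonneg a).trans ha)
  -- derivatives
  have hu : ∀ z, HasFDerivAt (fun z => wcW lam p z * J (f z))
      (wcW lam p z • (deriv J (f z) • fderiv ℝ (⇑f) z)
        + J (f z) • ((p * (1 + lam^2*‖z‖^2) ^ (p-1) * (2*lam^2)) • innerSL ℝ z)) z := by
    intro z
    have h2 : HasFDerivAt (fun y => J (f y)) (deriv J (f z) • fderiv ℝ (⇑f) z) z :=
      (hJd (f z)).hasDerivAt.comp_hasFDerivAt z (f.differentiable z).hasFDerivAt
    exact (wc_hasFDerivAt_weight lam p z).mul h2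
  have hufderiv : ∀ z, fderiv ℝ (fun z => wcW lam p z * J (f z)) z v
      = wcW lam p z * (deriv J (f z) * f1 z) + J (f z) * wcWv lam p i z := by
    intro z
    rw [(hu z).fderiv]
    simp only [ContinuousLinearMap.add_apply, ContinuousLinearMap.smul_apply,
      smul_eq_mul, innerSL_apply_apply, hf1coe, wcWv, ← hv]
    all_goals ring
  have hGf : ∀ z, HasFDerivAt (fun y => wcG J (f y)) (J (f z) • fderiv ℝ (⇑f) z) z := by
    intro z
    exact (wc_G_hasDerivAt hJc (f z)).comp_hasFDerivAt z (f.differentiable z).hasFDerivAt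
  have hGfderiv : ∀ z, fderiv ℝ (fun y => wcG J (f y)) z v = J (f z) * f1 z := by
    intro z
    rw [(hGf z).fderiv]
    simp only [ContinuousLinearMap.smul_apply, smul_eq_mul, hf1coe]
  have hWv : ∀ z, HasFDerivAt (wcWv lam p i)
      ((p * (1 + lam^2*‖z‖^2) ^ (p-1) * (2*lam^2)) • (innerSL ℝ v)
        + (inner ℝ z v : ℝ) •
          ((2*lam^2) • (p • (((p-1) * (1 + lam^2*‖z‖^2) ^ (p-1-1) * (2*lam^2)) • innerSL ℝ z)))) z := by
    intro z
    exact wc_hasFDerivAt_Wvf lam p v z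
  have hWvfderiv : ∀ z, fderiv ℝ (wcWv lam p i) z v = wcD lam p i z := by
    intro z
    rw [(hWv z).fderiv]
    simp only [ContinuousLinearMap.add_apply, ContinuousLinearMap.smul_apply,
      smul_eq_mul, innerSL_apply_apply, wcD, ← hv, hvv, real_inner_comm v z]
    all_goals ring
  -- integrability of the products appearing in the two integrations by parts
  have hIB : Integrable (fun x => fderiv ℝ (fun z => wcW lam p z * J (f z)) x v * f1 x)
      volume := by
    have he : (fun x => fderiv ℝ (fun z => wcW lam p z * J (f z)) x v * f1 x)
        = fun x => (wcW lam p x * (deriv J (f x) * f1 x)) * f1 x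
            + (J (f x) * wcWv lam p i x) * f1 x := by
      funext x
      rw [hufderiv x]
      ring
    rw [he]
    apply Integrable.add
    · apply hbm _ (1*(M1*R1)) (hwc.mul ((hJ'c.comp f.continuous).mul f1.continuous)) _ hIf1
      intro z
      exact habs2 _ _ _ _ (by rw [abs_of_nonneg (hw_nonneg z)]; exact hw_le_one z)
        (habs2 _ _ _ _ (hJ'fb z) (hf1R z))
    · apply hbm _ (M0*(2* |p| *lam)) ((hJc.comp f.continuous).mul hWvc) _ hIf1
      intro z
      exact habs2 _ _ _ _ (hJfb z) (hWvb z)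
  have hIC : Integrable (fun x => wcW lam p x * J (f x) * f1 x) volume := by
    apply hbm _ (1*M0) (hwc.mul (hJc.comp f.continuous)) _ hIf1
    intro z
    exact habs2 _ _ _ _ (by rw [abs_of_nonneg (hw_nonneg z)]; exact hw_le_one z) (hJfb z)
  have hIA : Integrable (fun x => wcW lam p x * J (f x) * fderiv ℝ (⇑f1) x v) volume := by
    have he : (fun x => wcW lam p x * J (f x) * fderiv ℝ (⇑f1) x v)
        = fun x => (wcW lam p x * J (f x)) * f2 x := by
      funext x
      rw [← hf2coe x]
    rw [he]
    apply hbm _ (1*M0) (hwc.mul (hJc.comp f.continuous)) _ hIf2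
    intro z
    exact habs2 _ _ _ _ (by rw [abs_of_nonneg (hw_nonneg z)]; exact hw_le_one z) (hJfb z)
  have hIBb : Integrable (fun x => wcWv lam p i x * (J (f x) * f1 x)) volume := by
    have he : (fun x => wcWv lam p i x * (J (f x) * f1 x))
        = fun x => (wcWv lam p i x * J (f x)) * f1 x := by
      funext x; ring
    rw [he]
    apply hbm _ ((2* |p| *lam)*M0) (hWvc.mul (hJc.comp f.continuous)) _ hIf1
    intro z
    exact habs2 _ _ _ _ (hWvb z) (hJfb z)
  have hID : Integrable (fun x => wcD lam p i x * wcG J (f x)) volume :=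
    hbm _ (2* |p| *lam^2 + 4* |p| * |p-1| *lam^2) hDc hDb hIG
  have hIWvG : Integrable (fun x => wcWv lam p i x * wcG J (f x)) volume :=
    hbm _ (2* |p| *lam) hWvc hWvb hIG
  -- first integration by parts
  have ibp1 := integral_mul_fderiv_eq_neg_fderiv_mul_of_integrable (μ := volume)
    (f := fun z => wcW lam p z * J (f z)) (g := ⇑f1) (v := v)
    hIB hIA hIC (fun z _ => (hu z).differentiableAt) (fun z _ => f1.differentiable z)
  -- second integration by parts
  have hIBb' : Integrable (fun x => wcWv lam p i x * fderiv ℝ (fun y => wcG J (f y)) x v)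
      volume := by
    have he : (fun x => wcWv lam p i x * fderiv ℝ (fun y => wcG J (f y)) x v)
        = fun x => wcWv lam p i x * (J (f x) * f1 x) := by
      funext x; rw [hGfderiv x]
    rw [he]; exact hIBb
  have hID' : Integrable (fun x => fderiv ℝ (wcWv lam p i) x v * wcG J (f x)) volume := by
    have he : (fun x => fderiv ℝ (wcWv lam p i) x v * wcG J (f x))
        = fun x => wcD lam p i x * wcG J (f x) := by
      funext x; rw [hWvfderiv x]
    rw [he]; exact hID
  have ibp2 := integral_mul_fderiv_eq_neg_fderiv_mul_of_integrable (μ := volume)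
    (f := wcWv lam p i) (g := fun y => wcG J (f y)) (v := v)
    hID' hIBb' hIWvG (fun z _ => (hWv z).differentiableAt) (fun z _ => (hGf z).differentiableAt)
  simp only [hWvfderiv, hGfderiv] at ibp2
  -- monotonicity step
  have hmono : (∫ x, wcWv lam p i x * (J (f x) * f1 x))
      ≤ ∫ x, fderiv ℝ (fun z => wcW lam p z * J (f z)) x v * f1 x := by
    apply integral_mono hIBb hIB
    intro x
    simp only
    rw [hufderiv x]
    have h0 : 0 ≤ wcW lam p x * deriv J (f x) * (f1 x)^2 :=
      mul_nonneg (mul_nonneg (hw_nonneg x) (hJ'nn _)) (sq_nonneg _)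
    nlinarith [h0]
  -- conclusion
  have hbeta : (∫ z, wcW lam p z * J (f z) * fderiv ℝ (⇑f1) z v)
      = - ∫ x, fderiv ℝ (fun z => wcW lam p z * J (f z)) x v * f1 x := ibp1
  rw [hbeta]
  linarith [hmono, ibp2]

end WCKey


private lemma wc_hbm {φ g : EuclideanSpace ℝ (Fin 4) → ℝ} {K : ℝ} (hc : Continuous φ)
    (hb : ∀ z, |φ z| ≤ K) (hg : Integrable g volume) :
    Integrable (fun z => φ z * g z) volume :=
  hg.bdd_mul hc.aestronglyMeasurable (Filter.Eventually.of_forall fun z => by simpa [Real.norm_eq_abs] using hb z)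

private lemma wc_int_wJmul (lam p : ℝ) (hp : p < 0) {J : ℝ → ℝ} (hJc : Continuous J)
    (f : SchwartzMap (EuclideanSpace ℝ (Fin 4)) ℝ) {g : EuclideanSpace ℝ (Fin 4) → ℝ}
    (hg : Integrable g volume) :
    Integrable (fun z => wcW lam p z * J (f z) * g z) volume := by
  have hq_pos : ∀ z : EuclideanSpace ℝ (Fin 4), (0:ℝ) < 1 + lam^2*‖z‖^2 := wc_q_pos lam
  have hw_nonneg : ∀ z, 0 ≤ wcW lam p z := fun z => Real.rpow_nonneg (by positivity) p
  have hw_le_one : ∀ z, wcW lam p z ≤ 1 := fun z =>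
    Real.rpow_le_one_of_one_le_of_nonpos (wc_q_one_le lam z) hp.le
  set R : ℝ := SchwartzMap.seminorm ℝ 0 0 f with hR
  have hfR : ∀ z, |f z| ≤ R := fun z => by
    simpa [Real.norm_eq_abs] using SchwartzMap.norm_le_seminorm ℝ f z
  obtain ⟨M0, hM0⟩ := (isCompact_Icc (a := -R) (b := R)).exists_bound_of_continuousOn
    hJc.continuousOn
  have hJfb : ∀ z, |J (f z)| ≤ M0 := fun z => by
    have := hM0 (f z) (by rcases abs_le.1 (hfR z) with ⟨h1, h2⟩; exact ⟨h1, h2⟩)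
    simpa [Real.norm_eq_abs] using this
  have hqc : Continuous (fun z : EuclideanSpace ℝ (Fin 4) => 1 + lam^2*‖z‖^2) := by fun_prop
  have hwc : Continuous (wcW lam p) := hqc.rpow_const (fun z => Or.inl (hq_pos z).ne')
  apply wc_hbm (K := 1 * M0) (hwc.mul (hJc.comp f.continuous)) _ hg
  intro z
  show |wcW lam p z * J (f z)| ≤ 1 * M0
  rw [abs_mul]
  apply mul_le_mul _ (hJfb z) (abs_nonneg _) (by norm_num)
  rw [abs_of_nonneg (hw_nonneg z)]
  exact hw_le_one z

private lemma wc_int_DG (lam p : ℝ) (hlam : 0 < lam) (hp : p < 0) {J : ℝ → ℝ}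
    (hJ : ContDiff ℝ 1 J)
    (f : SchwartzMap (EuclideanSpace ℝ (Fin 4)) ℝ) (i : Fin 4) :
    Integrable (fun z => wcD lam p i z * wcG J (f z)) volume := by
  have hJc : Continuous J := hJ.continuous
  set v : EuclideanSpace ℝ (Fin 4) := EuclideanSpace.single i 1 with hv
  have hq_pos : ∀ z : EuclideanSpace ℝ (Fin 4), (0:ℝ) < 1 + lam^2*‖z‖^2 := wc_q_pos lam
  have hq_one : ∀ z : EuclideanSpace ℝ (Fin 4), (1:ℝ) ≤ 1 + lam^2*‖z‖^2 := wc_q_one_le lam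
  have hw1_nonneg : ∀ z : EuclideanSpace ℝ (Fin 4), 0 ≤ (1 + lam^2*‖z‖^2) ^ (p-1) :=
    fun z => Real.rpow_nonneg (by positivity) _
  have hw1_le_one : ∀ z : EuclideanSpace ℝ (Fin 4), (1 + lam^2*‖z‖^2) ^ (p-1) ≤ 1 := fun z =>
    Real.rpow_le_one_of_one_le_of_nonpos (hq_one z) (by linarith)
  have hw2_nonneg : ∀ z : EuclideanSpace ℝ (Fin 4), 0 ≤ (1 + lam^2*‖z‖^2) ^ (p-1-1) :=
    fun z => Real.rpow_nonneg (by positivity) _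
  have hinner_le : ∀ z : EuclideanSpace ℝ (Fin 4), |(inner ℝ z v : ℝ)| ≤ ‖z‖ := fun z => by
    calc |(inner ℝ z v : ℝ)| ≤ ‖z‖ * ‖v‖ := abs_real_inner_le_norm z v
    _ = ‖z‖ := by rw [hv]; simp
  have hvv : (inner ℝ v v : ℝ) = 1 := by
    rw [hv]; simp [EuclideanSpace.inner_single_right]
  have hkey2 : ∀ z : EuclideanSpace ℝ (Fin 4),
      lam^2 * ‖z‖^2 * (1 + lam^2*‖z‖^2) ^ (p-1-1) ≤ 1 := by
    intro z
    have h1 : lam^2*‖z‖^2 * (1 + lam^2*‖z‖^2) ^ (p-1-1)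
        ≤ (1 + lam^2*‖z‖^2) ^ (p-1-1) * (1 + lam^2*‖z‖^2) := by
      rw [mul_comm]
      exact mul_le_mul_of_nonneg_left (by nlinarith [sq_nonneg (lam*‖z‖)]) (hw2_nonneg z)
    have h2 : (1 + lam^2*‖z‖^2) ^ (p-1-1) * (1 + lam^2*‖z‖^2) = (1 + lam^2*‖z‖^2) ^ (p-1) := by
      rw [← Real.rpow_add_one (hq_pos z).ne' (p-1-1)]
      congr 1
      ring
    calc lam^2*‖z‖^2 * (1 + lam^2*‖z‖^2) ^ (p-1-1)
        ≤ (1 + lam^2*‖z‖^2) ^ (p-1) := le_of_le_of_eq h1 h2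
    _ ≤ 1 := hw1_le_one z
  have hDb : ∀ z, |wcD lam p i z| ≤ 2* |p| *lam^2 + 4* |p| * |p-1| *lam^2 := by
    intro z
    rw [wcD, ← hv, hvv]
    have h1 : |2*p*lam^2 * (1 + lam^2*‖z‖^2) ^ (p-1) * 1| ≤ 2* |p| *lam^2 := by
      rw [mul_one, abs_mul, abs_of_nonneg (hw1_nonneg z)]
      have : |2*p*lam^2| = 2* |p| *lam^2 := by
        rw [show 2*p*lam^2 = p * (2*lam^2) by ring, abs_mul,
          abs_of_nonneg (by positivity : (0:ℝ) ≤ 2*lam^2)]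
        ring
      rw [this]
      nlinarith [mul_le_mul_of_nonneg_left (hw1_le_one z)
        (show (0:ℝ) ≤ 2 * |p| * lam^2 by positivity)]
    have h2 : |4*p*(p-1)*lam^4 * (1 + lam^2*‖z‖^2) ^ (p-1-1) * (inner ℝ z v : ℝ)^2|
        ≤ 4* |p| * |p-1| *lam^2 := by
      have ha : |4*p*(p-1)*lam^4 * (1 + lam^2*‖z‖^2) ^ (p-1-1) * (inner ℝ z v : ℝ)^2|
          = (4* |p| * |p-1| *lam^2) * (lam^2 * ((1 + lam^2*‖z‖^2) ^ (p-1-1) * (inner ℝ z v : ℝ)^2)) := by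
        rw [abs_mul, abs_mul, abs_of_nonneg (hw2_nonneg z),
          abs_of_nonneg (sq_nonneg (inner ℝ z v : ℝ))]
        rw [show 4*p*(p-1)*lam^4 = (p * (p-1)) * (4*lam^4) by ring, abs_mul,
          abs_mul p (p-1), abs_of_nonneg (by positivity : (0:ℝ) ≤ 4*lam^4)]
        ring
      rw [ha]
      have hb : lam^2 * ((1 + lam^2*‖z‖^2) ^ (p-1-1) * (inner ℝ z v : ℝ)^2) ≤ 1 := by
        have hc : (inner ℝ z v : ℝ)^2 ≤ ‖z‖^2 := by
          rw [← sq_abs (inner ℝ z v : ℝ)]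
          exact pow_le_pow_left₀ (abs_nonneg _) (hinner_le z) 2
        calc lam^2 * ((1 + lam^2*‖z‖^2) ^ (p-1-1) * (inner ℝ z v : ℝ)^2)
            ≤ lam^2 * ((1 + lam^2*‖z‖^2) ^ (p-1-1) * ‖z‖^2) := by
              apply mul_le_mul_of_nonneg_left
                (mul_le_mul_of_nonneg_left hc (hw2_nonneg z)) (by positivity)
        _ = lam^2 * ‖z‖^2 * (1 + lam^2*‖z‖^2) ^ (p-1-1) := by ring
        _ ≤ 1 := hkey2 z
      nlinarith [mul_le_mul_of_nonneg_left hb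
        (show (0:ℝ) ≤ 4 * |p| * |p-1| * lam^2 by positivity)]
    calc |2*p*lam^2 * (1 + lam^2*‖z‖^2) ^ (p-1) * 1
          + 4*p*(p-1)*lam^4 * (1 + lam^2*‖z‖^2) ^ (p-1-1) * (inner ℝ z v : ℝ)^2|
        ≤ |2*p*lam^2 * (1 + lam^2*‖z‖^2) ^ (p-1) * 1|
          + |4*p*(p-1)*lam^4 * (1 + lam^2*‖z‖^2) ^ (p-1-1) * (inner ℝ z v : ℝ)^2| := abs_add_le _ _
    _ ≤ 2* |p| *lam^2 + 4* |p| * |p-1| *lam^2 := add_le_add h1 h2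
  -- continuity of D
  have hqc : Continuous (fun z : EuclideanSpace ℝ (Fin 4) => 1 + lam^2*‖z‖^2) := by fun_prop
  have hwc1 : Continuous (fun z : EuclideanSpace ℝ (Fin 4) => (1 + lam^2*‖z‖^2) ^ (p-1)) :=
    hqc.rpow_const (fun z => Or.inl (hq_pos z).ne')
  have hwc2 : Continuous (fun z : EuclideanSpace ℝ (Fin 4) => (1 + lam^2*‖z‖^2) ^ (p-1-1)) :=
    hqc.rpow_const (fun z => Or.inl (hq_pos z).ne')
  have hinnerc : Continuous (fun z : EuclideanSpace ℝ (Fin 4) => (inner ℝ z v : ℝ)) :=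
    continuous_id.inner continuous_const
  have hDc : Continuous (wcD lam p i) := by
    unfold wcD
    rw [← hv]
    exact (((continuous_const.mul hwc1).mul continuous_const).add
      ((continuous_const.mul hwc2).mul (hinnerc.pow 2)))
  -- integrability of G ∘ f
  set R : ℝ := SchwartzMap.seminorm ℝ 0 0 f with hR
  have hfR : ∀ z, |f z| ≤ R := fun z => by
    simpa [Real.norm_eq_abs] using SchwartzMap.norm_le_seminorm ℝ f z
  obtain ⟨M0, hM0⟩ := (isCompact_Icc (a := -R) (b := R)).exists_bound_of_continuousOn
    hJc.continuousOn
  have hGd : Differentiable ℝ (wcG J) := fun t => (wc_G_hasDerivAt hJc t).differentiableAt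
  have hGc : Continuous (wcG J) := hGd.continuous
  have hIG : Integrable (fun z => wcG J (f z)) volume := by
    apply Integrable.mono ((f.integrable).const_mul M0)
      ((hGc.comp f.continuous).aestronglyMeasurable)
    filter_upwards with z
    simp only [Real.norm_eq_abs]
    calc |wcG J (f z)| ≤ M0 * |f z| :=
      wc_G_abs_le hJc (fun x hx => by simpa [Real.norm_eq_abs] using hM0 x hx) (hfR z)
    _ ≤ |M0 * f z| := by
      rw [abs_mul]
      exact mul_le_mul_of_nonneg_right (le_abs_self M0) (abs_nonneg _)
  exact wc_hbm hDc hDb hIG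

/-- Weighted coercivity of `-Δ + m²` tested against `J(f)`: for `λ` small enough
(depending only on `ℓ` and `m`), for all nondecreasing `C¹` functions `J` with `J(0) = 0`
and all Schwartz `f`,
`∫ w_λ J(f) (−Δf + m²f) ≥ (m²/2) ∫ w_λ J(f) f` with `w_λ(ẑ) = (1 + λ²‖ẑ‖²)^{−ℓ/2}`. -/
theorem weighted_coercivity (ℓ m : ℝ) (hℓ : 0 < ℓ) (hm : 0 < m) :
    ∃ lam₀ : ℝ, 0 < lam₀ ∧
      ∀ J : ℝ → ℝ, ContDiff ℝ 1 J → Monotone J → J 0 = 0 →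
      ∀ lam : ℝ, 0 < lam → lam ≤ lam₀ →
      ∀ f : SchwartzMap (EuclideanSpace ℝ (Fin 4)) ℝ,
        m ^ 2 / 2 *
            ∫ z : EuclideanSpace ℝ (Fin 4),
              (1 + lam ^ 2 * ‖z‖ ^ 2) ^ (-(ℓ / 2)) * J (f z) * f z ≤
          ∫ z : EuclideanSpace ℝ (Fin 4),
            (1 + lam ^ 2 * ‖z‖ ^ 2) ^ (-(ℓ / 2)) * J (f z) *
              (-laplacian4 (⇑f) z + m ^ 2 * f z) := by
  have hC : (0:ℝ) < ℓ^2 + 2*ℓ := by positivity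
  refine ⟨m / Real.sqrt (2*(ℓ^2 + 2*ℓ)), by positivity, ?_⟩
  intro J hJ hJmono hJ0 lam hlam hlamle f
  have hJc : Continuous J := hJ.continuous
  have hlam2 : (ℓ^2 + 2*ℓ) * lam^2 ≤ m^2/2 := by
    have h1 : lam^2 ≤ (m / Real.sqrt (2*(ℓ^2 + 2*ℓ)))^2 :=
      pow_le_pow_left₀ hlam.le hlamle 2
    rw [div_pow, Real.sq_sqrt (by positivity)] at h1
    have h2 : (ℓ^2 + 2*ℓ) * lam^2 ≤ (ℓ^2 + 2*ℓ) * (m^2 / (2*(ℓ^2 + 2*ℓ))) :=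
      mul_le_mul_of_nonneg_left h1 hC.le
    calc (ℓ^2 + 2*ℓ) * lam^2 ≤ (ℓ^2 + 2*ℓ) * (m^2 / (2*(ℓ^2 + 2*ℓ))) := h2
    _ = m^2/2 := by
      have h3 := hC.ne'
      field_simp
  set p : ℝ := -(ℓ/2) with hp
  have hppos : p < 0 := by rw [hp]; linarith
  show m^2/2 * (∫ z : EuclideanSpace ℝ (Fin 4), wcW lam p z * J (f z) * f z)
      ≤ ∫ z : EuclideanSpace ℝ (Fin 4),
          wcW lam p z * J (f z) * (-laplacian4 (⇑f) z + m^2 * f z)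
  -- second derivatives of f as Schwartz functions
  set F2 : Fin 4 → SchwartzMap (EuclideanSpace ℝ (Fin 4)) ℝ := fun i =>
    SchwartzMap.evalCLM ℝ _ ℝ (EuclideanSpace.single i 1)
      (SchwartzMap.fderivCLM ℝ _ ℝ
        (SchwartzMap.evalCLM ℝ _ ℝ (EuclideanSpace.single i 1)
          (SchwartzMap.fderivCLM ℝ _ ℝ f))) with hF2def
  have hF2 : ∀ (i : Fin 4) z, F2 i z
      = fderiv ℝ (fun y => fderiv ℝ (⇑f) y (EuclideanSpace.single i 1)) z
          (EuclideanSpace.single i 1) := fun i z => rfl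
  have hlap : ∀ z, laplacian4 (⇑f) z = ∑ i, F2 i z := by
    intro z
    rw [laplacian4]
    exact Finset.sum_congr rfl fun i _ => (hF2 i z).symm
  -- integrability
  have hIwJff : Integrable (fun z => wcW lam p z * J (f z) * f z) volume :=
    wc_int_wJmul lam p hppos hJc f f.integrable
  have hIA : ∀ i : Fin 4, Integrable (fun z => wcW lam p z * J (f z) * F2 i z) volume :=
    fun i => wc_int_wJmul lam p hppos hJc f (F2 i).integrable
  have hID : ∀ i : Fin 4, Integrable (fun z => wcD lam p i z * wcG J (f z)) volume :=
    fun i => wc_int_DG lam p hlam hppos hJ f i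
  -- split the right-hand side
  have hsplit : (∫ z : EuclideanSpace ℝ (Fin 4),
        wcW lam p z * J (f z) * (-laplacian4 (⇑f) z + m^2 * f z))
      = -(∑ i : Fin 4, ∫ z : EuclideanSpace ℝ (Fin 4), wcW lam p z * J (f z) * F2 i z)
        + m^2 * ∫ z : EuclideanSpace ℝ (Fin 4), wcW lam p z * J (f z) * f z := by
    have he : (fun z : EuclideanSpace ℝ (Fin 4) =>
          wcW lam p z * J (f z) * (-laplacian4 (⇑f) z + m^2 * f z))
        = fun z => -(∑ i : Fin 4, wcW lam p z * J (f z) * F2 i z)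
            + m^2 * (wcW lam p z * J (f z) * f z) := by
      funext z
      rw [hlap z, mul_add, mul_neg, Finset.mul_sum]
      ring
    have h1 : Integrable (fun z : EuclideanSpace ℝ (Fin 4) =>
        -(∑ i : Fin 4, wcW lam p z * J (f z) * F2 i z)) volume :=
      (integrable_finset_sum _ fun i _ => hIA i).neg
    rw [he, integral_add h1 (hIwJff.const_mul (m^2)), integral_neg,
      integral_finset_sum _ (fun i _ => hIA i), integral_const_mul]
  -- per-direction estimate from integration by parts
  have hkey : ∀ i : Fin 4, (∫ z : EuclideanSpace ℝ (Fin 4), wcW lam p z * J (f z) * F2 i z)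
      ≤ ∫ z : EuclideanSpace ℝ (Fin 4), wcD lam p i z * wcG J (f z) :=
    fun i => wc_key_step lam p hlam hppos hJ hJmono hJ0 f i
  -- the sum of the second derivatives of the weight
  have hq_pos : ∀ z : EuclideanSpace ℝ (Fin 4), (0:ℝ) < 1 + lam^2*‖z‖^2 := wc_q_pos lam
  have hq_one : ∀ z : EuclideanSpace ℝ (Fin 4), (1:ℝ) ≤ 1 + lam^2*‖z‖^2 := wc_q_one_le lam
  have hw_nonneg : ∀ z, 0 ≤ wcW lam p z := fun z => Real.rpow_nonneg (by positivity) p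
  have hw2_nonneg : ∀ z : EuclideanSpace ℝ (Fin 4), 0 ≤ (1 + lam^2*‖z‖^2) ^ (p-1-1) :=
    fun z => Real.rpow_nonneg (by positivity) _
  have hw1_nonneg : ∀ z : EuclideanSpace ℝ (Fin 4), 0 ≤ (1 + lam^2*‖z‖^2) ^ (p-1) :=
    fun z => Real.rpow_nonneg (by positivity) _
  have hsumD : ∀ z : EuclideanSpace ℝ (Fin 4), (∑ i : Fin 4, wcD lam p i z)
      = 8*p*lam^2 * (1 + lam^2*‖z‖^2) ^ (p-1)
        + 4*p*(p-1)*lam^4 * (1 + lam^2*‖z‖^2) ^ (p-1-1) * ‖z‖^2 := by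
    intro z
    have h1 : ∀ i : Fin 4,
        (inner ℝ (EuclideanSpace.single i (1:ℝ)) (EuclideanSpace.single i (1:ℝ)) : ℝ) = 1 :=
      fun i => by simp [EuclideanSpace.inner_single_right]
    have h2 : ∀ i : Fin 4, (inner ℝ z (EuclideanSpace.single i (1:ℝ)) : ℝ) = z i :=
      fun i => by simp [EuclideanSpace.inner_single_right]
    have h3 : ∑ i : Fin 4, (z i)^2 = ‖z‖^2 := by
      rw [PiLp.norm_sq_eq_of_L2]
      simp [sq_abs]
    simp only [wcD, h1, h2, mul_one]
    rw [Finset.sum_add_distrib, Finset.sum_const, ← Finset.mul_sum, h3]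
    simp only [Finset.card_univ, Fintype.card_fin, nsmul_eq_mul]
    push_cast
    ring
  -- pointwise bound for the sum
  have hpt : ∀ z : EuclideanSpace ℝ (Fin 4),
      (∑ i : Fin 4, wcD lam p i z * wcG J (f z))
        ≤ ((ℓ^2 + 2*ℓ) * lam^2) * (wcW lam p z * J (f z) * f z) := by
    intro z
    rw [← Finset.sum_mul]
    have hG0 : 0 ≤ wcG J (f z) := wc_G_nonneg hJc hJmono hJ0 (f z)
    have hGle : wcG J (f z) ≤ f z * J (f z) := wc_G_le hJc hJmono hJ0 (f z)
    have hDle : (∑ i : Fin 4, wcD lam p i z) ≤ ((ℓ^2 + 2*ℓ)*lam^2) * wcW lam p z := by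
      rw [hsumD z]
      have e0 : 4*p*(p-1) = ℓ^2 + 2*ℓ := by rw [hp]; ring
      have e1 : 8*p*lam^2 * (1 + lam^2*‖z‖^2) ^ (p-1) ≤ 0 := by
        nlinarith [mul_nonpos_of_nonpos_of_nonneg hppos.le
          (mul_nonneg (sq_nonneg lam) (hw1_nonneg z))]
      have e2 : 4*p*(p-1)*lam^4 * (1 + lam^2*‖z‖^2) ^ (p-1-1) * ‖z‖^2
          ≤ ((ℓ^2 + 2*ℓ)*lam^2) * wcW lam p z := by
        have h4 : lam^2*‖z‖^2 * (1 + lam^2*‖z‖^2) ^ (p-1-1)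
            ≤ (1 + lam^2*‖z‖^2) ^ (p-1-1) * (1 + lam^2*‖z‖^2) := by
          rw [mul_comm]
          exact mul_le_mul_of_nonneg_left (by nlinarith [sq_nonneg (lam*‖z‖)]) (hw2_nonneg z)
        have h5 : (1 + lam^2*‖z‖^2) ^ (p-1-1) * (1 + lam^2*‖z‖^2)
            = (1 + lam^2*‖z‖^2) ^ (p-1) := by
          rw [← Real.rpow_add_one (hq_pos z).ne' (p-1-1)]
          congr 1
          ring
        have h6 : (1 + lam^2*‖z‖^2) ^ (p-1) ≤ (1 + lam^2*‖z‖^2) ^ p :=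
          Real.rpow_le_rpow_of_exponent_le (hq_one z) (by linarith)
        have h7 : lam^2*‖z‖^2 * (1 + lam^2*‖z‖^2) ^ (p-1-1) ≤ (1 + lam^2*‖z‖^2) ^ p :=
          le_trans (le_of_le_of_eq h4 h5) h6
        have h8 : 0 ≤ (ℓ^2 + 2*ℓ)*lam^2 := by positivity
        have h9 := mul_le_mul_of_nonneg_left h7 h8
        calc 4*p*(p-1)*lam^4 * (1 + lam^2*‖z‖^2) ^ (p-1-1) * ‖z‖^2
            = ((ℓ^2 + 2*ℓ)*lam^2) * (lam^2*‖z‖^2 * (1 + lam^2*‖z‖^2) ^ (p-1-1)) := by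
              rw [← e0]; ring
        _ ≤ ((ℓ^2 + 2*ℓ)*lam^2) * (1 + lam^2*‖z‖^2) ^ p := h9
        _ = ((ℓ^2 + 2*ℓ)*lam^2) * wcW lam p z := rfl
      linarith [e1, e2]
    calc (∑ i : Fin 4, wcD lam p i z) * wcG J (f z)
        ≤ (((ℓ^2 + 2*ℓ)*lam^2) * wcW lam p z) * wcG J (f z) :=
          mul_le_mul_of_nonneg_right hDle hG0
    _ ≤ (((ℓ^2 + 2*ℓ)*lam^2) * wcW lam p z) * (f z * J (f z)) := by
        exact mul_le_mul_of_nonneg_left hGle (mul_nonneg (by positivity) (hw_nonneg z))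
    _ = ((ℓ^2 + 2*ℓ) * lam^2) * (wcW lam p z * J (f z) * f z) := by ring
  -- chain of inequalities
  have hnn : 0 ≤ ∫ z : EuclideanSpace ℝ (Fin 4), wcW lam p z * J (f z) * f z := by
    apply integral_nonneg
    intro z
    have htJ : 0 ≤ J (f z) * f z := by
      rcases le_total 0 (f z) with h | h
      · have : 0 ≤ J (f z) := by simpa [hJ0] using hJmono h
        exact mul_nonneg this h
      · have : J (f z) ≤ 0 := by simpa [hJ0] using hJmono h
        nlinarith [mul_nonneg (neg_nonneg.2 this) (neg_nonneg.2 h)]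
    have := mul_nonneg (hw_nonneg z) htJ
    simp only [Pi.zero_apply]
    nlinarith [this]
  have hchain : (∑ i : Fin 4, ∫ z : EuclideanSpace ℝ (Fin 4), wcW lam p z * J (f z) * F2 i z)
      ≤ m^2/2 * ∫ z : EuclideanSpace ℝ (Fin 4), wcW lam p z * J (f z) * f z := by
    calc (∑ i : Fin 4, ∫ z : EuclideanSpace ℝ (Fin 4), wcW lam p z * J (f z) * F2 i z)
        ≤ ∑ i : Fin 4, ∫ z : EuclideanSpace ℝ (Fin 4), wcD lam p i z * wcG J (f z) :=
          Finset.sum_le_sum fun i _ => hkey i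
    _ = ∫ z : EuclideanSpace ℝ (Fin 4), ∑ i : Fin 4, wcD lam p i z * wcG J (f z) :=
          (integral_finset_sum _ (fun i _ => hID i)).symm
    _ ≤ ∫ z : EuclideanSpace ℝ (Fin 4),
          ((ℓ^2 + 2*ℓ) * lam^2) * (wcW lam p z * J (f z) * f z) := by
        apply integral_mono (integrable_finset_sum _ fun i _ => hID i)
          (hIwJff.const_mul _) hpt
    _ = ((ℓ^2 + 2*ℓ) * lam^2) * ∫ z : EuclideanSpace ℝ (Fin 4),
          wcW lam p z * J (f z) * f z := integral_const_mul _ _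
    _ ≤ m^2/2 * ∫ z : EuclideanSpace ℝ (Fin 4), wcW lam p z * J (f z) * f z :=
          mul_le_mul_of_nonneg_right hlam2 hnn
  rw [hsplit]
  linarith [hchain]
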